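/- Let u be a regular form. Then u satisfies H_q(Φ u) + Ψ u + B(x^{-1} u (h_q u)) = 0 (Φ monic, Ψ, B polynomials) if and only if its formal Stieltjes series satisfies the q-Riccati equation (h_{q^{-1}}Φ)(z) · H_{q^{-1}}(S(u))(z) = B(z) S(u)(z) (h_{q^{-1}}S(u))(z) + C(z) S(u)(z) + D(z), where C(z) = −(H_{q^{-1}}Φ)(z) − qΨ(z) and D(z) = −{H_{q^{-1}}(uθ_0Φ)(z) + q(uθ_0Ψ)(z) + q((u (h_q u))(θ_0²B))(z)}. -/

import Mathlib

open Polynomial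

noncomputable section

namespace QLH

/-- A *form*: a linear functional on ℂ[x]. -/
abbrev PForm : Type := Polynomial ℂ →ₗ[ℂ] ℂ

private lemma divByMonic_add (d f g : Polynomial ℂ) (hd : d.Monic) :
    (f + g) /ₘ d = f /ₘ d + g /ₘ d := by
  apply mul_left_cancel₀ hd.ne_zero
  have h1 : d * (f /ₘ d) = f - f %ₘ d := by
    rw [Polynomial.modByMonic_eq_sub_mul_div f d]; ring
  have h2 : d * (g /ₘ d) = g - g %ₘ d := by
    rw [Polynomial.modByMonic_eq_sub_mul_div g d]; ring
  have h3 : d * ((f + g) /ₘ d) = (f + g) - (f + g) %ₘ d := by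
    rw [Polynomial.modByMonic_eq_sub_mul_div (f + g) d]; ring
  rw [mul_add, h1, h2, h3, Polynomial.add_modByMonic]
  ring

private lemma divByMonic_smul (d f : Polynomial ℂ) (a : ℂ) (hd : d.Monic) :
    (a • f) /ₘ d = a • (f /ₘ d) := by
  apply mul_left_cancel₀ hd.ne_zero
  have h1 : d * (f /ₘ d) = f - f %ₘ d := by
    rw [Polynomial.modByMonic_eq_sub_mul_div f d]; ring
  have h3 : d * ((a • f) /ₘ d) = (a • f) - (a • f) %ₘ d := by
    rw [Polynomial.modByMonic_eq_sub_mul_div (a • f) d]; ring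
  rw [h3, Polynomial.smul_modByMonic, mul_smul_comm, h1, smul_sub]

/-- `(h_a f)(x) = f (a x)`. -/
def hP (a : ℂ) : Polynomial ℂ →ₗ[ℂ] Polynomial ℂ :=
  (Polynomial.aeval (Polynomial.C a * Polynomial.X : Polynomial ℂ)).toLinearMap

/-- `(θ_c f)(x) = (f(x) - f(c))/(x - c)`. -/
def thetaP (c : ℂ) : Polynomial ℂ →ₗ[ℂ] Polynomial ℂ where
  toFun f := (f - C (f.eval c)) /ₘ (X - C c)
  map_add' f g := by
    try dsimp only
    have h : f + g - C ((f + g).eval c)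
        = (f - C (f.eval c)) + (g - C (g.eval c)) := by
      simp only [eval_add, C_add]; ring
    rw [h, divByMonic_add _ _ _ (monic_X_sub_C c)]
  map_smul' a f := by
    try dsimp only
    have h : a • f - C ((a • f).eval c) = a • (f - C (f.eval c)) := by
      simp only [eval_smul, smul_eq_mul, smul_sub, Polynomial.smul_C]
    rw [h, divByMonic_smul _ _ _ (monic_X_sub_C c)]
    rfl

/-- `(H_q f)(x) = (f(qx) - f(x))/((q-1)x)`. -/
def HqP (q : ℂ) : Polynomial ℂ →ₗ[ℂ] Polynomial ℂ :=
  (q - 1)⁻¹ • (thetaP 0 ∘ₗ (hP q - LinearMap.id))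

/-- `⟨h_a u, f⟩ = ⟨u, h_a f⟩`. -/
def hF (a : ℂ) (u : PForm) : PForm := u ∘ₗ hP a

/-- `⟨H_q u, f⟩ = -⟨u, H_q f⟩`. -/
def HqF (q : ℂ) (u : PForm) : PForm := -(u ∘ₗ HqP q)

/-- `⟨g u, f⟩ = ⟨u, g f⟩`. -/
def mF (g : Polynomial ℂ) (u : PForm) : PForm := u ∘ₗ LinearMap.mulLeft ℂ g

/-- `⟨(x - c)⁻¹ u, f⟩ = ⟨u, θ_c f⟩`. -/
def divF (c : ℂ) (u : PForm) : PForm := u ∘ₗ thetaP c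

/-- The Dirac form `δ_c`. -/
def deltaF (c : ℂ) : PForm := Polynomial.leval c

/-- Kernel used in the left product of a form by a polynomial. -/
def kern (u : PForm) (j : ℕ) : Polynomial ℂ :=
  ∑ i ∈ Finset.range (j + 1), C (u (X ^ (j - i))) * X ^ i

/-- The left product `f ↦ u f`, `(uf)(x) = ⟨u_ζ, (x f(x) - ζ f(ζ))/(x - ζ)⟩`. -/
def lmul (u : PForm) : Polynomial ℂ →ₗ[ℂ] Polynomial ℂ where
  toFun f := f.sum fun j a => a • kern u j
  map_add' f g :=
    Polynomial.sum_add_index f g _ (fun i => zero_smul ℂ _) fun i b₁ b₂ => add_smul b₁ b₂ _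
  map_smul' a f := by
    try dsimp only
    rw [Polynomial.sum_smul_index f a (fun j b => b • kern u j) fun i => zero_smul ℂ _]
    simp only [Polynomial.sum_def, mul_smul, ← Finset.smul_sum]
    rfl

/-- The Cauchy product of two forms: `⟨uv, f⟩ = ⟨u, v f⟩`. -/
def cF (u v : PForm) : PForm := u ∘ₗ lmul v

/-- The q-difference equation `H_q(Φu) + Ψu + B(x⁻¹ u (h_q u)) = 0`. -/
def LHeq (q : ℂ) (u : PForm) (Φ Ψ B : Polynomial ℂ) : Prop :=
  HqF q (mF Φ u) + mF Ψ u + mF B (divF 0 (cF u (hF q u))) = 0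

/-- A form is regular when it possesses a MOPS. -/
def IsRegular (u : PForm) : Prop :=
  ∃ P : ℕ → Polynomial ℂ, (∀ n, (P n).Monic) ∧ (∀ n, (P n).natDegree = n) ∧
    (∀ n, u (P n * P n) ≠ 0) ∧ ∀ m n, m ≠ n → u (P m * P n) = 0

/-- A regular form is q-semiclassical when it satisfies `H_q(Φu) + Ψu = 0`, `Φ` monic. -/
def IsSemiclassical (q : ℂ) (u : PForm) : Prop :=
  IsRegular u ∧ ∃ Φ Ψ : Polynomial ℂ, Φ.Monic ∧ HqF q (mF Φ u) + mF Ψ u = 0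

/-- A regular form is q-Laguerre–Hahn when it satisfies some equation `LHeq`. -/
def IsLaguerreHahn (q : ℂ) (u : PForm) : Prop :=
  IsRegular u ∧ ∃ Φ Ψ B : Polynomial ℂ, Φ.Monic ∧ LHeq q u Φ Ψ B

/-- `u` is of class `s`: `s` is the minimum of `max (deg Ψ - 1) (max (deg Φ) (deg B) - 2)`
over all q-difference equations `LHeq q u Φ Ψ B` (`Φ` monic) satisfied by `u`. -/
def HasClass (q : ℂ) (u : PForm) (s : ℕ) : Prop :=
  (∃ Φ Ψ B : Polynomial ℂ, Φ.Monic ∧ LHeq q u Φ Ψ B ∧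
      Φ.natDegree ≤ s + 2 ∧ B.natDegree ≤ s + 2 ∧ Ψ.natDegree ≤ s + 1) ∧
  ∀ t : ℕ, (∃ Φ Ψ B : Polynomial ℂ, Φ.Monic ∧ LHeq q u Φ Ψ B ∧
      Φ.natDegree ≤ t + 2 ∧ B.natDegree ≤ t + 2 ∧ Ψ.natDegree ≤ t + 1) → s ≤ t

/-- Formal Stieltjes series `S(u)(z) = -∑ (u)_n z^{-n-1}`, as a formal Laurent
series in the variable `T = z⁻¹`. -/
def Sf (u : PForm) : LaurentSeries ℂ :=
  HahnSeries.ofPowerSeries ℤ ℂ (PowerSeries.mk fun n => if n = 0 then 0 else -u (X ^ (n - 1)))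

/-- A polynomial `f(z)`, viewed as a formal Laurent series in `T = z⁻¹`. -/
def toLS (f : Polynomial ℂ) : LaurentSeries ℂ :=
  ∑ j ∈ Finset.range (f.natDegree + 1), HahnSeries.single (-(j : ℤ)) (f.coeff j)

/-- The Laurent series `z` (in the variable `T = z⁻¹`). -/
def zLS : LaurentSeries ℂ := HahnSeries.single (-1 : ℤ) 1

/-- `(h_a F)(z) = F(az)` on formal Laurent series in `T = z⁻¹`. -/
def hLS (a : ℂ) (F : LaurentSeries ℂ) : LaurentSeries ℂ where
  coeff := fun k => a ^ (-k) * F.coeff k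
  isPWO_support' := F.isPWO_support'.mono fun k hk => by
    simp only [Function.mem_support] at hk ⊢
    exact fun h => hk (by rw [h, mul_zero])

/-- `(H_q F)(z) = (F(qz) - F(z))/((q-1)z)` on formal Laurent series in `T = z⁻¹`. -/
def HqLS (q : ℂ) (F : LaurentSeries ℂ) : LaurentSeries ℂ :=
  HahnSeries.single (1 : ℤ) ((q - 1)⁻¹) * (hLS q F - F)



section Proof15

private lemma LS_ext {F G : LaurentSeries ℂ} (h : ∀ k : ℤ, F.coeff k = G.coeff k) : F = G :=
  HahnSeries.coeff_inj.mp (funext h)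

private lemma sumcoeff {α : Type*} (s : Finset α) (F : α → LaurentSeries ℂ) (k : ℤ) :
    (∑ i ∈ s, F i).coeff k = ∑ i ∈ s, (F i).coeff k := by
  classical
  induction s using Finset.induction_on with
  | empty => simp
  | insert _ _ h ih => rw [Finset.sum_insert h, Finset.sum_insert h, HahnSeries.coeff_add, ih]

private lemma single_mul_coeff (b : ℤ) (r : ℂ) (F : LaurentSeries ℂ) (k : ℤ) :
    (HahnSeries.single b r * F).coeff k = r * F.coeff (k - b) := by
  have h := HahnSeries.coeff_single_mul_add (r := r) (x := F) (a := k - b) (b := b)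
  rwa [sub_add_cancel] at h

/-! ### coefficients of `toLS` and `Sf` -/

private lemma toLS_coeff (f : Polynomial ℂ) (k : ℤ) :
    (toLS f).coeff k = if k ≤ 0 then f.coeff (-k).toNat else 0 := by
  rw [toLS, sumcoeff]
  split_ifs with hk
  · have hcond : ∀ j : ℕ, (k = -(j : ℤ)) ↔ (j = (-k).toNat) := by intro j; omega
    simp only [HahnSeries.coeff_single, hcond]
    rw [Finset.sum_ite_eq' (Finset.range (f.natDegree + 1)) ((-k).toNat)
      (fun j => f.coeff j)]
    split_ifs with hmem
    · rfl
    · rw [Finset.mem_range] at hmem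
      exact (Polynomial.coeff_eq_zero_of_natDegree_lt (by omega)).symm
  · apply Finset.sum_eq_zero
    intro j hj
    rw [HahnSeries.coeff_single, if_neg (by omega)]

private lemma toLS_add (f g : Polynomial ℂ) : toLS (f + g) = toLS f + toLS g := by
  apply LS_ext; intro k
  rw [HahnSeries.coeff_add, toLS_coeff, toLS_coeff, toLS_coeff]
  split_ifs
  · rw [Polynomial.coeff_add]
  · rw [add_zero]

private lemma toLS_zero : toLS 0 = 0 := by
  apply LS_ext; intro k
  rw [toLS_coeff, HahnSeries.coeff_zero]
  split_ifs <;> simp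

private lemma toLS_neg (f : Polynomial ℂ) : toLS (-f) = -toLS f := by
  apply LS_ext; intro k
  rw [HahnSeries.coeff_neg, toLS_coeff, toLS_coeff]
  split_ifs
  · rw [Polynomial.coeff_neg]
  · rw [neg_zero]

private lemma toLS_sub (f g : Polynomial ℂ) : toLS (f - g) = toLS f - toLS g := by
  rw [sub_eq_add_neg, toLS_add, toLS_neg, sub_eq_add_neg]

private lemma toLS_smul (a : ℂ) (f : Polynomial ℂ) : toLS (a • f) = a • toLS f := by
  apply LS_ext; intro k
  rw [HahnSeries.coeff_smul, toLS_coeff, toLS_coeff]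
  split_ifs
  · rw [Polynomial.coeff_smul]
  · rw [smul_zero]

private lemma toLS_monomial (c : ℂ) (m : ℕ) :
    toLS (C c * X ^ m) = HahnSeries.single (-(m : ℤ)) c := by
  apply LS_ext; intro k
  rw [toLS_coeff, HahnSeries.coeff_single]
  simp only [Polynomial.coeff_C_mul, Polynomial.coeff_X_pow]
  by_cases hk : k ≤ 0
  · rw [if_pos hk]
    by_cases hm : k = -(m : ℤ)
    · rw [if_pos hm, if_pos (by omega), mul_one]
    · rw [if_neg hm, if_neg (by omega), mul_zero]
  · rw [if_neg hk, if_neg (by omega)]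

private lemma ofPS_coeff (φ : PowerSeries ℂ) (k : ℤ) :
    (HahnSeries.ofPowerSeries ℤ ℂ φ).coeff k
      = if 0 ≤ k then PowerSeries.coeff k.toNat φ else 0 := by
  split_ifs with hk
  · have hk' : k = ((k.toNat : ℕ) : ℤ) := by omega
    conv_lhs => rw [hk']
    exact HahnSeries.ofPowerSeries_apply_coeff φ k.toNat
  · rw [HahnSeries.ofPowerSeries_apply, HahnSeries.embDomain_notin_image_support]
    rintro ⟨n, -, hn⟩
    simp at hn
    omega

private lemma Sf_coeff (v : PForm) (k : ℤ) :
    (Sf v).coeff k = if 1 ≤ k then -v (X ^ (k.toNat - 1)) else 0 := by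
  rw [Sf, ofPS_coeff]
  by_cases hk : 1 ≤ k
  · rw [if_pos (by omega : (0:ℤ) ≤ k), if_pos hk, PowerSeries.coeff_mk,
      if_neg (by omega : ¬ k.toNat = 0)]
  · rw [if_neg hk]
    by_cases h0 : 0 ≤ k
    · rw [if_pos h0, PowerSeries.coeff_mk, if_pos (by omega)]
    · rw [if_neg h0]

/-! ### application lemmas for the operations on forms -/

private lemma mF_apply (g : Polynomial ℂ) (v : PForm) (t : Polynomial ℂ) :
    mF g v t = v (g * t) := rfl

private lemma hF_apply (a : ℂ) (v : PForm) (t : Polynomial ℂ) : hF a v t = v (hP a t) := rfl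

private lemma divF_apply (c : ℂ) (v : PForm) (t : Polynomial ℂ) :
    divF c v t = v (thetaP c t) := rfl

private lemma HqF_apply (q : ℂ) (v : PForm) (t : Polynomial ℂ) :
    HqF q v t = -(v (HqP q t)) := rfl

private lemma cF_apply (u v : PForm) (t : Polynomial ℂ) : cF u v t = u (lmul v t) := rfl

private lemma lmul_apply (v : PForm) (f : Polynomial ℂ) :
    lmul v f = f.sum fun j a => a • kern v j := rfl

private lemma thetaP_zero_apply (f : Polynomial ℂ) : thetaP 0 f = f.divX := by
  show (f - C (f.eval 0)) /ₘ (X - C 0) = f.divX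
  rw [map_zero, sub_zero, ← Polynomial.coeff_zero_eq_eval_zero]
  have h : f - C (f.coeff 0) = X * f.divX := by
    linear_combination -(Polynomial.X_mul_divX_add f)
  rw [h, Polynomial.mul_divByMonic_cancel_left _ Polynomial.monic_X]

private lemma hP_monomial (a c : ℂ) (m : ℕ) :
    hP a (C c * X ^ m) = C (a ^ m * c) * X ^ m := by
  show Polynomial.aeval (C a * X) (C c * X ^ m) = _
  rw [map_mul, map_pow, Polynomial.aeval_C, Polynomial.aeval_X, Polynomial.algebraMap_eq,
    mul_pow, ← Polynomial.C_pow, map_mul]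
  ring

private lemma HqP_monomial (p c : ℂ) (m : ℕ) :
    HqP p (C c * X ^ m) = C ((p - 1)⁻¹ * ((p ^ m - 1) * c)) * X ^ (m - 1) := by
  have h0 : HqP p (C c * X ^ m)
      = (p - 1)⁻¹ • (thetaP 0 (hP p (C c * X ^ m) - (C c * X ^ m))) := by
    simp only [HqP, LinearMap.smul_apply, LinearMap.comp_apply, LinearMap.sub_apply,
      LinearMap.id_apply]
  rw [h0, hP_monomial, thetaP_zero_apply]
  have h1 : (C (p ^ m * c) * X ^ m : Polynomial ℂ) - C c * X ^ m
      = C ((p ^ m - 1) * c) * X ^ m := by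
    simp only [map_sub, map_mul, map_one]
    ring
  rw [h1, Polynomial.divX_C_mul_X_pow]
  cases m with
  | zero =>
      norm_num
  | succ n =>
      rw [if_neg (Nat.succ_ne_zero n), Polynomial.smul_eq_C_mul, ← mul_assoc, ← map_mul]

private lemma kern_coeff (v : PForm) (j i : ℕ) :
    (kern v j).coeff i = if i ≤ j then v (X ^ (j - i)) else 0 := by
  rw [kern, Polynomial.finset_sum_coeff]
  simp only [Polynomial.coeff_C_mul, Polynomial.coeff_X_pow, mul_ite, mul_one, mul_zero]
  rw [Finset.sum_ite_eq (Finset.range (j + 1)) i (fun i' => v (X ^ (j - i')))]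
  simp [Finset.mem_range, Nat.lt_succ_iff]

private lemma lmul_monomial (v : PForm) (c : ℂ) (m : ℕ) :
    lmul v (C c * X ^ m) = c • kern v m := by
  rw [Polynomial.C_mul_X_pow_eq_monomial, lmul_apply]
  exact Polynomial.sum_monomial_index c _ (zero_smul ℂ _)

private lemma apply_C_mul_X_pow (v : PForm) (a : ℂ) (n : ℕ) :
    v (C a * X ^ n) = a * v (X ^ n) := by
  rw [← Polynomial.smul_eq_C_mul, map_smul, smul_eq_mul]

private lemma lmul_X_pow (v : PForm) (n : ℕ) : lmul v (X ^ n) = kern v n := by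
  have h := lmul_monomial v 1 n
  rw [map_one, one_mul, one_smul] at h
  exact h

private lemma cF_moment (u v : PForm) (n : ℕ) :
    cF u v (X ^ n) = ∑ i ∈ Finset.range (n + 1), v (X ^ (n - i)) * u (X ^ i) := by
  rw [cF_apply, lmul_X_pow, kern, map_sum]
  exact Finset.sum_congr rfl fun i _ => apply_C_mul_X_pow u _ i

private lemma divF_moment (w : PForm) (t : ℕ) :
    divF 0 w (X ^ t) = if t = 0 then 0 else w (X ^ (t - 1)) := by
  rw [divF_apply, thetaP_zero_apply, Polynomial.divX_X_pow]
  split_ifs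
  · rw [map_zero]
  · rfl

private lemma hF_moment (a : ℂ) (v : PForm) (n : ℕ) :
    hF a v (X ^ n) = a ^ n * v (X ^ n) := by
  rw [hF_apply]
  have h := hP_monomial a 1 n
  rw [map_one, one_mul, mul_one] at h
  rw [h, apply_C_mul_X_pow]

private lemma HqF_moment (q : ℂ) (v : PForm) (n : ℕ) :
    HqF q v (X ^ n) = -((q - 1)⁻¹ * ((q ^ n - 1) * v (X ^ (n - 1)))) := by
  rw [HqF_apply]
  have h := HqP_monomial q 1 n
  rw [map_one, one_mul, mul_one] at h
  rw [h, apply_C_mul_X_pow]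
  ring

private lemma mF_monomial_moment (c : ℂ) (m : ℕ) (v : PForm) (t : ℕ) :
    mF (C c * X ^ m) v (X ^ t) = c * v (X ^ (m + t)) := by
  rw [mF_apply, mul_assoc, ← pow_add, apply_C_mul_X_pow]

/-! ### `Sf` is linear and injective -/

private lemma Sf_add (v w : PForm) : Sf (v + w) = Sf v + Sf w := by
  apply LS_ext; intro k
  rw [HahnSeries.coeff_add, Sf_coeff, Sf_coeff, Sf_coeff]
  split_ifs
  · rw [LinearMap.add_apply]; ring
  · rw [add_zero]

private lemma Sf_zero : Sf 0 = 0 := by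
  apply LS_ext; intro k
  rw [Sf_coeff, HahnSeries.coeff_zero]
  split_ifs <;> simp

private lemma Sf_eq_zero_iff (v : PForm) : Sf v = 0 ↔ v = 0 := by
  constructor
  · intro h
    have hm : ∀ n : ℕ, v (X ^ n) = 0 := by
      intro n
      have h1 : (Sf v).coeff ((n : ℤ) + 1) = 0 := by rw [h, HahnSeries.coeff_zero]
      rw [Sf_coeff, if_pos (by omega)] at h1
      have h2 : ((n : ℤ) + 1).toNat - 1 = n := by omega
      rw [h2] at h1
      exact neg_eq_zero.mp h1
    apply LinearMap.ext
    intro f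
    simp only [LinearMap.zero_apply]
    induction f using Polynomial.induction_on' with
    | add p q hp hq => rw [map_add, hp, hq, add_zero]
    | monomial n a =>
        rw [← Polynomial.C_mul_X_pow_eq_monomial, apply_C_mul_X_pow, hm, mul_zero]
  · rintro rfl; exact Sf_zero

/-! ### `Sf` against the operations -/

private lemma mF_add_left (f g : Polynomial ℂ) (v : PForm) :
    mF (f + g) v = mF f v + mF g v := by
  apply LinearMap.ext; intro t
  simp only [mF_apply, LinearMap.add_apply, add_mul, map_add]

private lemma Sf_mF (g : Polynomial ℂ) (v : PForm) :
    Sf (mF g v) = toLS g * Sf v + toLS (lmul v g.divX) := by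
  induction g using Polynomial.induction_on' with
  | add f g hf hg =>
      rw [mF_add_left, Sf_add, hf, hg, toLS_add, Polynomial.divX_add, map_add, toLS_add, add_mul]
      ring
  | monomial m c =>
      rw [← Polynomial.C_mul_X_pow_eq_monomial]
      cases m with
      | zero =>
          rw [pow_zero, mul_one, Polynomial.divX_C, map_zero, toLS_zero, add_zero]
          have hC : toLS (C c) = HahnSeries.single (-(0:ℕ) : ℤ) c := by
            have h := toLS_monomial c 0
            rwa [pow_zero, mul_one] at h
          rw [hC]
          apply LS_ext; intro k
          rw [Sf_coeff, single_mul_coeff, Sf_coeff]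
          by_cases h1 : 1 ≤ k
          · rw [if_pos h1, if_pos (by omega)]
            have : mF (C c) v (X ^ (k.toNat - 1)) = c * v (X ^ (k.toNat - 1)) := by
              rw [mF_apply, ← Polynomial.smul_eq_C_mul, map_smul, smul_eq_mul]
            rw [this]
            have he : k - -((0:ℕ) : ℤ) = k := by omega
            rw [he]
            ring
          · rw [if_neg h1, if_neg (by omega), mul_zero]
      | succ n =>
          rw [Polynomial.divX_C_mul_X_pow, if_neg (Nat.succ_ne_zero n)]
          have hsub : (n + 1) - 1 = n := rfl
          rw [hsub, lmul_monomial, toLS_smul, toLS_monomial]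
          apply LS_ext; intro k
          rw [Sf_coeff, HahnSeries.coeff_add, single_mul_coeff, Sf_coeff,
            HahnSeries.coeff_smul, toLS_coeff]
          by_cases h1 : 1 ≤ k
          · rw [if_pos h1, if_pos (by omega : (1:ℤ) ≤ k - -((n+1 : ℕ) : ℤ)),
              if_neg (by omega : ¬ k ≤ 0), mF_monomial_moment]
            have he : (n + 1) + (k.toNat - 1) = (k - -((n+1 : ℕ) : ℤ)).toNat - 1 := by omega
            rw [he]
            simp only [smul_eq_mul, mul_zero]
            ring
          · rw [if_neg h1]
            by_cases h2 : 1 ≤ k - -((n+1 : ℕ) : ℤ)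
            · rw [if_pos h2, if_pos (by omega : k ≤ 0), kern_coeff,
                if_pos (by omega : (-k).toNat ≤ n)]
              have he : (k - -((n+1 : ℕ) : ℤ)).toNat - 1 = n - (-k).toNat := by omega
              rw [he]
              simp only [smul_eq_mul]
              ring
            · rw [if_neg h2]
              by_cases h3 : k ≤ 0
              · rw [if_pos h3, kern_coeff, if_neg (by omega : ¬ (-k).toNat ≤ n)]
                simp
              · rw [if_neg h3]
                simp

private lemma Sfmul_prod (u v : PForm) (m : ℕ) :
    (Sf u * Sf v).coeff (m : ℤ)
      = ∑ i ∈ Finset.range (m + 1),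
          (if i = 0 then 0 else -u (X ^ (i - 1)))
            * (if m - i = 0 then 0 else -v (X ^ (m - i - 1))) := by
  rw [Sf, Sf, ← map_mul, ofPS_coeff, if_pos (by omega)]
  have hm : ((m : ℤ)).toNat = m := by omega
  rw [hm, PowerSeries.coeff_mul, Finset.Nat.sum_antidiagonal_eq_sum_range_succ_mk]
  simp only [PowerSeries.coeff_mk]

private lemma Sfmul_neg (u v : PForm) (k : ℤ) (hk : k < 0) : (Sf u * Sf v).coeff k = 0 := by
  rw [Sf, Sf, ← map_mul, ofPS_coeff, if_neg (by omega)]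

private lemma Sfmul_zero (u v : PForm) : (Sf u * Sf v).coeff (0 : ℤ) = 0 := by
  have h := Sfmul_prod u v 0
  rw [Nat.cast_zero] at h
  rw [h, Finset.sum_range_one]
  norm_num

private lemma Sfmul_one (u v : PForm) : (Sf u * Sf v).coeff (1 : ℤ) = 0 := by
  have h := Sfmul_prod u v 1
  rw [Nat.cast_one] at h
  rw [h, Finset.sum_range_succ, Finset.sum_range_one]
  norm_num

private lemma Sfmul_coeff2 (u v : PForm) (n : ℕ) :
    (Sf u * Sf v).coeff ((n : ℤ) + 2)
      = ∑ i ∈ Finset.range (n + 1), u (X ^ i) * v (X ^ (n - i)) := by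
  have hcast : ((n : ℤ) + 2) = ((n + 2 : ℕ) : ℤ) := by push_cast; ring
  rw [hcast, Sfmul_prod, Finset.sum_range_succ', Finset.sum_range_succ]
  norm_num
  apply Finset.sum_congr rfl
  intro i hi
  rw [Finset.mem_range] at hi
  rw [if_neg (by omega : ¬ n + 2 - (i + 1) = 0)]
  have he2 : n + 2 - (i + 1) - 1 = n - i := by omega
  rw [he2]

private lemma Sf_cF (u v : PForm) :
    Sf (cF u v) = -(HahnSeries.single (-1 : ℤ) 1 * (Sf u * Sf v)) := by
  apply LS_ext; intro k
  rw [Sf_coeff, HahnSeries.coeff_neg, single_mul_coeff, one_mul]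
  have hk1 : k - (-1 : ℤ) = k + 1 := by ring
  rw [hk1]
  by_cases h1 : 1 ≤ k
  · rw [if_pos h1, cF_moment]
    have hk2 : k + 1 = ((k.toNat - 1 : ℕ) : ℤ) + 2 := by omega
    rw [hk2, Sfmul_coeff2]
    congr 1
    apply Finset.sum_congr rfl
    intro i hi
    ring
  · rw [if_neg h1]
    rcases lt_trichotomy (k + 1) 0 with h | h | h
    · rw [Sfmul_neg u v _ h, neg_zero]
    · rw [h, Sfmul_zero, neg_zero]
    · rw [show k + 1 = (1 : ℤ) by omega, Sfmul_one, neg_zero]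

private lemma Sf_divF (w : PForm) :
    Sf (divF 0 w) = HahnSeries.single (1 : ℤ) 1 * Sf w := by
  apply LS_ext; intro k
  rw [single_mul_coeff, one_mul, Sf_coeff, Sf_coeff]
  by_cases h2 : 2 ≤ k
  · rw [if_pos (by omega), if_pos (by omega), divF_moment, if_neg (by omega)]
    have he : k.toNat - 1 - 1 = (k - 1).toNat - 1 := by omega
    rw [he]
  · by_cases h1 : 1 ≤ k
    · rw [if_pos h1, if_neg (by omega), divF_moment, if_pos (by omega), neg_zero]
    · rw [if_neg h1, if_neg (by omega)]

private lemma hLS_coeff (a : ℂ) (F : LaurentSeries ℂ) (k : ℤ) :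
    (hLS a F).coeff k = a ^ (-k) * F.coeff k := rfl

private lemma Sf_hF (a : ℂ) (ha : a ≠ 0) (v : PForm) :
    Sf (hF a v) = a⁻¹ • hLS a⁻¹ (Sf v) := by
  apply LS_ext; intro k
  rw [HahnSeries.coeff_smul, hLS_coeff, Sf_coeff, Sf_coeff]
  by_cases h1 : 1 ≤ k
  · rw [if_pos h1, if_pos h1, hF_moment]
    rw [inv_zpow, zpow_neg, inv_inv]
    have hzk : a ^ k = a ^ (k.toNat : ℕ) := by
      rw [← zpow_natCast]; congr 1; omega
    rw [hzk]
    have h2 : a ^ (k.toNat : ℕ) = a * a ^ (k.toNat - 1) := by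
      conv_lhs => rw [show k.toNat = 1 + (k.toNat - 1) by omega]
      rw [pow_add, pow_one]
    rw [h2, smul_eq_mul]
    field_simp
  · rw [if_neg h1, if_neg h1, mul_zero, smul_zero]

private lemma Sf_HqF (q : ℂ) (hq0 : q ≠ 0) (hq1 : q ≠ 1) (v : PForm) :
    Sf (HqF q v) = q⁻¹ • HqLS q⁻¹ (Sf v) := by
  have hA : q - 1 ≠ 0 := sub_ne_zero.2 hq1
  have hB : q⁻¹ - 1 ≠ 0 := sub_ne_zero.2 (fun h => hq1 (by rw [← inv_inv q, h, inv_one]))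
  apply LS_ext; intro k
  rw [HahnSeries.coeff_smul, HqLS, single_mul_coeff, HahnSeries.coeff_sub, hLS_coeff,
    Sf_coeff, Sf_coeff]
  by_cases h1 : 1 ≤ k
  · rw [if_pos h1, HqF_moment]
    by_cases h2 : 2 ≤ k
    · rw [if_pos (by omega : (1:ℤ) ≤ k - 1)]
      rw [zpow_neg, inv_zpow, inv_inv]
      have hzk : q ^ (k - 1) = q ^ ((k.toNat - 1 : ℕ) : ℕ) := by
        rw [← zpow_natCast]; congr 1; omega
      rw [hzk]
      have he : (k - 1).toNat - 1 = k.toNat - 1 - 1 := by omega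
      rw [he]
      set A := v (X ^ (k.toNat - 1 - 1))
      have hc : (1 : ℂ) - q ≠ 0 := fun h => hq1 ((sub_eq_zero.mp h).symm)
      field_simp
      linear_combination (-(q ^ (k.toNat - 1) * A - A)) * mul_inv_cancel₀ hc
        + (-(q ^ (k.toNat - 1) * A - A) * (1 - q) * (1 - q)⁻¹) * mul_inv_cancel₀ hq0
    · have hk : k = 1 := by omega
      subst hk
      rw [if_neg (by omega)]
      norm_num
  · rw [if_neg h1, if_neg (by omega : ¬ (1:ℤ) ≤ k - 1)]
    simp

/-! ### algebra of `hLS` and `HqLS` -/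

private lemma hLS_add (a : ℂ) (F G : LaurentSeries ℂ) :
    hLS a (F + G) = hLS a F + hLS a G := by
  apply LS_ext; intro k
  rw [HahnSeries.coeff_add, hLS_coeff, hLS_coeff, hLS_coeff, HahnSeries.coeff_add]
  ring

private lemma single_sub (b : ℤ) (r s : ℂ) :
    HahnSeries.single b r - HahnSeries.single b s = HahnSeries.single b (r - s) := by
  apply LS_ext; intro k
  rw [HahnSeries.coeff_sub, HahnSeries.coeff_single, HahnSeries.coeff_single,
    HahnSeries.coeff_single]
  split_ifs <;> simp

private lemma hLS_single (a : ℂ) (b : ℤ) (r : ℂ) :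
    hLS a (HahnSeries.single b r) = HahnSeries.single b (a ^ (-b) * r) := by
  apply LS_ext; intro k
  rw [hLS_coeff, HahnSeries.coeff_single, HahnSeries.coeff_single]
  split_ifs with h
  · rw [h]
  · rw [mul_zero]

private lemma hLS_single_mul (a : ℂ) (ha : a ≠ 0) (b : ℤ) (r : ℂ) (F : LaurentSeries ℂ) :
    hLS a (HahnSeries.single b r * F) = HahnSeries.single b (a ^ (-b) * r) * hLS a F := by
  apply LS_ext; intro k
  rw [hLS_coeff, single_mul_coeff, single_mul_coeff, hLS_coeff]
  have h : a ^ (-k) = a ^ (-b) * a ^ (-(k - b)) := by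
    rw [← zpow_add₀ ha]
    congr 1
    ring
  rw [h]
  ring

private lemma HqLS_add (p : ℂ) (F G : LaurentSeries ℂ) :
    HqLS p (F + G) = HqLS p F + HqLS p G := by
  rw [HqLS, HqLS, HqLS, hLS_add]
  ring

private lemma hLS_toLS (p : ℂ) (f : Polynomial ℂ) : hLS p (toLS f) = toLS (hP p f) := by
  induction f using Polynomial.induction_on' with
  | add g h hg hh => rw [toLS_add, hLS_add, hg, hh, map_add, toLS_add]
  | monomial m c =>
      rw [← Polynomial.C_mul_X_pow_eq_monomial, toLS_monomial, hP_monomial, toLS_monomial,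
        hLS_single, neg_neg, zpow_natCast]

private lemma toLS_HqP (p : ℂ) (f : Polynomial ℂ) : toLS (HqP p f) = HqLS p (toLS f) := by
  induction f using Polynomial.induction_on' with
  | add g h hg hh => rw [map_add, toLS_add, toLS_add, hg, hh, HqLS_add]
  | monomial m c =>
      rw [← Polynomial.C_mul_X_pow_eq_monomial, HqP_monomial, toLS_monomial, toLS_monomial]
      rw [HqLS, hLS_single, neg_neg, zpow_natCast, single_sub, HahnSeries.single_mul_single]
      cases m with
      | zero =>
          norm_num
      | succ n =>
          rw [show ((n : ℕ) + 1 - 1 : ℕ) = n from rfl]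
          rw [show (1 : ℤ) + -((n + 1 : ℕ) : ℤ) = -((n : ℕ) : ℤ) by push_cast; ring]
          congr 1
          ring

private lemma hLS_toLS_mul (p : ℂ) (hp : p ≠ 0) (f : Polynomial ℂ) (F : LaurentSeries ℂ) :
    hLS p (toLS f * F) = toLS (hP p f) * hLS p F := by
  induction f using Polynomial.induction_on' with
  | add g h hg hh => rw [toLS_add, add_mul, hLS_add, hg, hh, map_add, toLS_add, add_mul]
  | monomial m c =>
      rw [← Polynomial.C_mul_X_pow_eq_monomial, toLS_monomial, hP_monomial, toLS_monomial,
        hLS_single_mul p hp, neg_neg, zpow_natCast]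

private lemma HqLS_toLS_mul (p : ℂ) (hp : p ≠ 0) (f : Polynomial ℂ) (F : LaurentSeries ℂ) :
    HqLS p (toLS f * F) = toLS (hP p f) * HqLS p F + toLS (HqP p f) * F := by
  rw [toLS_HqP]
  simp only [HqLS]
  rw [hLS_toLS_mul p hp, hLS_toLS]
  ring

/-! ### the left product against `divF` -/

private lemma lmul_divF (w : PForm) (f : Polynomial ℂ) :
    lmul (divF 0 w) f = lmul w f.divX := by
  induction f using Polynomial.induction_on' with
  | add p q hp hq => rw [map_add, hp, hq, Polynomial.divX_add, map_add]
  | monomial m c =>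
      rw [← Polynomial.C_mul_X_pow_eq_monomial, lmul_monomial, Polynomial.divX_C_mul_X_pow]
      cases m with
      | zero =>
          rw [if_pos rfl, map_zero]
          have h0 : kern (divF 0 w) 0 = 0 := by
            rw [kern, Finset.sum_range_one, divF_moment, if_pos (by omega), map_zero, zero_mul]
          rw [h0, smul_zero]
      | succ n =>
          rw [if_neg (Nat.succ_ne_zero n), lmul_monomial,
            show ((n : ℕ) + 1 - 1 : ℕ) = n from rfl]
          congr 1
          apply Polynomial.ext; intro i
          rw [kern_coeff, kern_coeff]
          by_cases hi : i ≤ n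
          · rw [if_pos (by omega : i ≤ n + 1), if_pos hi, divF_moment, if_neg (by omega)]
            have he : n + 1 - i - 1 = n - i := by omega
            rw [he]
          · by_cases hi' : i ≤ n + 1
            · rw [if_pos hi', if_neg hi, divF_moment, if_pos (by omega)]
            · rw [if_neg hi', if_neg hi]

end Proof15

/-- Proposition 6: `u` satisfies the q-difference equation iff
`S(u)` satisfies the corresponding q-Riccati equation. -/
theorem riccati_characterization (q : ℂ) (hq0 : q ≠ 0) (hq : ∀ n : ℕ, 1 ≤ n → q ^ n ≠ 1)
    (u : PForm) (hreg : IsRegular u)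
    (Φ Ψ B Cp Dp : Polynomial ℂ) (hΦ : Φ.Monic)
    (hC : Cp = -(HqP q⁻¹ Φ) - q • Ψ)
    (hD : Dp = -(HqP q⁻¹ (lmul u (thetaP 0 Φ)) + q • lmul u (thetaP 0 Ψ)
        + q • lmul (cF u (hF q u)) (thetaP 0 (thetaP 0 B)))) :
    LHeq q u Φ Ψ B ↔
      toLS (hP q⁻¹ Φ) * HqLS q⁻¹ (Sf u)
        = toLS B * Sf u * hLS q⁻¹ (Sf u) + toLS Cp * Sf u + toLS Dp := by
  have hq1 : q ≠ 1 := fun h => hq 1 le_rfl (by rw [h, pow_one])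
  have hp0 : (q : ℂ)⁻¹ ≠ 0 := inv_ne_zero hq0
  have hCq : (HahnSeries.C (q⁻¹ : ℂ) : LaurentSeries ℂ) * HahnSeries.C (q : ℂ) = 1 := by
    rw [← map_mul, inv_mul_cancel₀ hq0, map_one]
  have hS : (HahnSeries.single (1 : ℤ) (1 : ℂ)) * HahnSeries.single (-1 : ℤ) (1 : ℂ) = 1 := by
    rw [HahnSeries.single_mul_single, mul_one]
    norm_num [HahnSeries.single_zero_one]
  have hCq2 : (HahnSeries.C (q : ℂ) : LaurentSeries ℂ) * HahnSeries.C (q⁻¹ : ℂ) = 1 := by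
    rw [← map_mul, mul_inv_cancel₀ hq0, map_one]
  have key : Sf (HqF q (mF Φ u) + mF Ψ u + mF B (divF 0 (cF u (hF q u))))
      = HahnSeries.C (q⁻¹ : ℂ) * (toLS (hP q⁻¹ Φ) * HqLS q⁻¹ (Sf u)
          - (toLS B * Sf u * hLS q⁻¹ (Sf u) + toLS Cp * Sf u + toLS Dp)) := by
    rw [Sf_add, Sf_add, Sf_HqF q hq0 hq1, Sf_mF, Sf_mF, Sf_mF, Sf_divF, Sf_cF,
      Sf_hF q hq0, lmul_divF, hC, hD]
    simp only [thetaP_zero_apply]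
    rw [toLS_sub, toLS_neg, toLS_smul, toLS_neg, toLS_add, toLS_add, toLS_smul, toLS_smul]
    rw [HqLS_add, HqLS_toLS_mul q⁻¹ hp0]
    simp only [toLS_HqP]
    simp only [← HahnSeries.C_mul_eq_smul]
    linear_combination (-(toLS Ψ * Sf u + toLS (lmul u Ψ.divX)
        + toLS (lmul (cF u (hF q u)) B.divX.divX))) * hCq
      + (-(HahnSeries.C (q⁻¹ : ℂ) * toLS B * Sf u * hLS q⁻¹ (Sf u))) * hS
  constructor
  · intro hL
    have h0 : Sf (HqF q (mF Φ u) + mF Ψ u + mF B (divF 0 (cF u (hF q u)))) = 0 := by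
      rw [show HqF q (mF Φ u) + mF Ψ u + mF B (divF 0 (cF u (hF q u))) = 0 from hL, Sf_zero]
    rw [key] at h0
    have h3 := congrArg (fun z => HahnSeries.C (q : ℂ) * z) h0
    simp only [mul_zero] at h3
    rw [← mul_assoc, hCq2, one_mul] at h3
    exact sub_eq_zero.mp h3
  · intro hR
    have h1 : toLS (hP q⁻¹ Φ) * HqLS q⁻¹ (Sf u)
        - (toLS B * Sf u * hLS q⁻¹ (Sf u) + toLS Cp * Sf u + toLS Dp) = 0 := sub_eq_zero.2 hR
    have h0 : Sf (HqF q (mF Φ u) + mF Ψ u + mF B (divF 0 (cF u (hF q u)))) = 0 := by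
      rw [key, h1, mul_zero]
    exact (Sf_eq_zero_iff _).1 h0


end QLH

end
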